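/- (The adjugate congruence is independent of the choice of lift.) Let R be a commutative k-algebra, r ≥ 2 an integer, q ∈ R, x ∈ Rⁿ, and y, y' ∈ Rˡ such that y'_j − y_j lies in the ideal (q^{r-1}) for every j. Assume that every component of f(x,y) lies in the ideal (q^{r-1}) and that Q(x,y) lies in the ideal (q). Then every component of Ĉ(x,y')·f(x,y') − Ĉ(x,y)·f(x,y) lies in the ideal (q^{r}). -/

import Mathlib

open MvPolynomial Matrix

noncomputable section

/-- The `l×l` Jacobian matrix `C(x,y)` of `f` with respect to the `y`-variables. -/
def jacC {k : Type*} [Field k] {n l : ℕ} (f : Fin l → MvPolynomial (Fin n ⊕ Fin l) k) :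
    Matrix (Fin l) (Fin l) (MvPolynomial (Fin n ⊕ Fin l) k) :=
  Matrix.of fun i j => pderiv (Sum.inr j) (f i)

/-- `Q(x,y) := det C(x,y)`. -/
def jacQ {k : Type*} [Field k] {n l : ℕ} (f : Fin l → MvPolynomial (Fin n ⊕ Fin l) k) :
    MvPolynomial (Fin n ⊕ Fin l) k :=
  (jacC f).det

/-- First-order Taylor expansion: if all `w s - v s` are divisible by `d`, then
`g(w) - g(v) - ∑ s (w s - v s) ∂ₛg(v)` is divisible by `d²`. -/
private lemma taylor_dvd {σ : Type*} [Fintype σ] [DecidableEq σ] {k R : Type*} [CommSemiring k]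
    [CommRing R] [Algebra k R] (d : R) (v w : σ → R) (hv : ∀ s, d ∣ (w s - v s))
    (g : MvPolynomial σ k) :
    d ^ 2 ∣ (aeval w g - aeval v g - ∑ s, (w s - v s) * aeval v (pderiv s g)) := by
  induction g using MvPolynomial.induction_on with
  | C a => simp
  | add p p' hp hp' =>
      have h := dvd_add hp hp'
      convert h using 1
      simp only [map_add, mul_add, Finset.sum_add_distrib]
      ring
  | mul_X p i hp =>
      have hS : d ∣ ∑ s, (w s - v s) * aeval v (pderiv s p) :=
        Finset.dvd_sum fun s _ => (hv s).mul_right _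
      have hT : d ∣ aeval w p - aeval v p - ∑ s, (w s - v s) * aeval v (pderiv s p) :=
        (dvd_pow_self d two_ne_zero).trans hp
      have hAa : d ∣ aeval w p - aeval v p := by
        have := dvd_add hT hS
        simpa using this
      have hterm : ∀ s, aeval v (pderiv s (p * X i)) =
          aeval v (pderiv s p) * v i + (if i = s then aeval v p else 0) := by
        intro s
        rw [pderiv_mul, pderiv_X, Pi.single_apply]
        by_cases h : i = s <;> simp [h]
      have hsum : ∑ s, (w s - v s) * aeval v (pderiv s (p * X i)) =
          (∑ s, (w s - v s) * aeval v (pderiv s p)) * v i + (w i - v i) * aeval v p := by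
        simp only [hterm, mul_add, Finset.sum_add_distrib, mul_ite, mul_zero,
          Finset.sum_ite_eq, Finset.mem_univ, if_true, Finset.sum_mul]
        congr 1
        exact Finset.sum_congr rfl fun s _ => by ring
      rw [_root_.map_mul, _root_.map_mul, aeval_X, aeval_X, hsum]
      have hrw : aeval w p * w i - aeval v p * v i -
          ((∑ s, (w s - v s) * aeval v (pderiv s p)) * v i + (w i - v i) * aeval v p) =
          (aeval w p - aeval v p) * (w i - v i) +
            v i * (aeval w p - aeval v p - ∑ s, (w s - v s) * aeval v (pderiv s p)) := by
        ring
      rw [hrw]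
      exact dvd_add (by rw [pow_two]; exact mul_dvd_mul hAa (hv i)) (hp.mul_left _)

/-- If all `w s - v s` are divisible by `d`, so is `g(w) - g(v)`. -/
private lemma aeval_sub_dvd {σ : Type*} [Fintype σ] [DecidableEq σ] {k R : Type*}
    [CommSemiring k] [CommRing R] [Algebra k R] (d : R) (v w : σ → R)
    (hv : ∀ s, d ∣ (w s - v s)) (g : MvPolynomial σ k) :
    d ∣ aeval w g - aeval v g := by
  have hT := (dvd_pow_self d two_ne_zero).trans (taylor_dvd d v w hv g)
  have hS : d ∣ ∑ s, (w s - v s) * aeval v (pderiv s g) :=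
    Finset.dvd_sum fun s _ => (hv s).mul_right _
  have := dvd_add hT hS
  simpa using this

/-- **The adjugate congruence is independent of the choice of lift.**
Let `R` be a commutative `k`-algebra, `r ≥ 2`, `q ∈ R`, `x ∈ Rⁿ`, and `y, y' ∈ Rˡ` with
`y'_j − y_j ∈ (q^(r-1))` for every `j`.  Assume every component of `f(x,y)` lies in
`(q^(r-1))` and `Q(x,y) ∈ (q)`.  Then every component of
`Ĉ(x,y')·f(x,y') − Ĉ(x,y)·f(x,y)` lies in `(q^r)`. -/
theorem adjugate_mulVec_f_congr {k : Type*} [Field k] {n l : ℕ} (hn : 1 ≤ n) (hl : 1 ≤ l)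
    (f : Fin l → MvPolynomial (Fin n ⊕ Fin l) k)
    {R : Type*} [CommRing R] [Algebra k R] (r : ℕ) (hr : 2 ≤ r)
    (q : R) (x : Fin n → R) (y y' : Fin l → R)
    (hyy' : ∀ j, y' j - y j ∈ Ideal.span {q ^ (r - 1)})
    (hf : ∀ i, aeval (Sum.elim x y) (f i) ∈ Ideal.span {q ^ (r - 1)})
    (hQ : aeval (Sum.elim x y) (jacQ f) ∈ Ideal.span {q}) :
    ∀ i,
      (Matrix.of fun i' j' => aeval (Sum.elim x y') (jacC f i' j')).adjugate.mulVec
          (fun i' => aeval (Sum.elim x y') (f i')) i -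
        (Matrix.of fun i' j' => aeval (Sum.elim x y) (jacC f i' j')).adjugate.mulVec
          (fun i' => aeval (Sum.elim x y) (f i')) i ∈ Ideal.span {q ^ r} := by
  intro i
  rw [Ideal.mem_span_singleton]
  set v : Fin n ⊕ Fin l → R := Sum.elim x y with hv
  set v' : Fin n ⊕ Fin l → R := Sum.elim x y' with hv'
  set A : Matrix (Fin l) (Fin l) R := Matrix.of fun i' j' => aeval v (jacC f i' j') with hA
  set A' : Matrix (Fin l) (Fin l) R := Matrix.of fun i' j' => aeval v' (jacC f i' j') with hA'
  set F : Fin l → R := fun i' => aeval v (f i') with hF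
  set F' : Fin l → R := fun i' => aeval v' (f i') with hF'
  -- basic divisibilities
  have he : ∀ s, q ^ (r - 1) ∣ (v' s - v s) := by
    rintro (a | j)
    · simp [hv, hv']
    · simpa [hv, hv', Ideal.mem_span_singleton] using hyy' j
  have hd : ∀ g : MvPolynomial (Fin n ⊕ Fin l) k, q ^ (r - 1) ∣ aeval v' g - aeval v g :=
    fun g => aeval_sub_dvd _ _ _ he g
  have hpow : q ^ r ∣ (q ^ (r - 1)) ^ 2 := by
    rw [← pow_mul]
    exact pow_dvd_pow q (by omega)
  have hFdvd : ∀ j, q ^ (r - 1) ∣ F j := fun j => by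
    simpa [Ideal.mem_span_singleton] using hf j
  -- A ≡ A' entrywise
  have hAA' : ∀ a b, q ^ (r - 1) ∣ A' a b - A a b := fun a b => hd (jacC f a b)
  -- adjugate congruence via quotient ring
  have hmapA : (Ideal.Quotient.mk (Ideal.span {q ^ (r - 1)})).mapMatrix A' =
      (Ideal.Quotient.mk (Ideal.span {q ^ (r - 1)})).mapMatrix A := by
    ext a b
    simp only [RingHom.mapMatrix_apply, Matrix.map_apply]
    rw [Ideal.Quotient.eq, Ideal.mem_span_singleton]
    exact hAA' a b
  have hadj : ∀ a b, q ^ (r - 1) ∣ A'.adjugate a b - A.adjugate a b := by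
    intro a b
    have h1 := (Ideal.Quotient.mk (Ideal.span {q ^ (r - 1)})).map_adjugate A'
    have h2 := (Ideal.Quotient.mk (Ideal.span {q ^ (r - 1)})).map_adjugate A
    have h3 : (Ideal.Quotient.mk (Ideal.span {q ^ (r - 1)})).mapMatrix A'.adjugate =
        (Ideal.Quotient.mk (Ideal.span {q ^ (r - 1)})).mapMatrix A.adjugate := by
      rw [h1, h2, hmapA]
    simp only [RingHom.mapMatrix_apply] at h3
    have h5 : (Ideal.Quotient.mk (Ideal.span {q ^ (r - 1)})) (A'.adjugate a b) =
        (Ideal.Quotient.mk (Ideal.span {q ^ (r - 1)})) (A.adjugate a b) := by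
      have := congrFun (congrFun (congrArg (fun M a b => M a b) h3) a) b
      simpa [Matrix.map_apply] using this
    rw [Ideal.Quotient.eq, Ideal.mem_span_singleton] at h5
    exact h5
  -- determinant congruence
  have hdet : q ^ (r - 1) ∣ A'.det - A.det := by
    have h1 := (Ideal.Quotient.mk (Ideal.span {q ^ (r - 1)})).map_det A'
    have h2 := (Ideal.Quotient.mk (Ideal.span {q ^ (r - 1)})).map_det A
    have h5 : (Ideal.Quotient.mk (Ideal.span {q ^ (r - 1)})) A'.det =
        (Ideal.Quotient.mk (Ideal.span {q ^ (r - 1)})) A.det := by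
      rw [h1, h2, hmapA]
    rw [Ideal.Quotient.eq, Ideal.mem_span_singleton] at h5
    exact h5
  -- q ∣ det A
  have hQd : q ∣ A.det := by
    have : aeval v (jacQ f) = A.det := by
      rw [jacQ]
      have := (aeval v : MvPolynomial (Fin n ⊕ Fin l) k →ₐ[k] R).toRingHom.map_det (jacC f)
      rw [hA]
      exact this
    rw [← this]
    simpa [Ideal.mem_span_singleton] using hQ
  -- Taylor expansion of each f component
  have htaylor : ∀ j, q ^ r ∣
      (F' j - F j - ∑ m, (y' m - y m) * A j m) := by
    intro j
    refine hpow.trans ?_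
    have h := taylor_dvd (q ^ (r - 1)) v v' he (f j)
    have hsum : ∑ s, (v' s - v s) * aeval v (pderiv s (f j)) =
        ∑ m, (y' m - y m) * A j m := by
      rw [Fintype.sum_sum_type]
      have : ∀ a : Fin n, (v' (Sum.inl a) - v (Sum.inl a)) *
          aeval v (pderiv (Sum.inl a) (f j)) = 0 := by
        intro a; simp [hv, hv']
      rw [Finset.sum_congr rfl (fun a _ => this a), Finset.sum_const_zero, zero_add]
      refine Finset.sum_congr rfl fun m _ => ?_
      simp [hv, hv', hA, jacC]
    rwa [hsum] at h
  -- the key decomposition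
  have hAA : ∀ m, (∑ j, A'.adjugate i j * A' j m) = A'.det * (if i = m then 1 else 0) := by
    intro m
    have h := congrFun (congrFun (congrArg (fun M a b => M a b) (Matrix.adjugate_mul A')) i) m
    simpa [Matrix.mul_apply, Matrix.smul_apply, Matrix.one_apply, smul_eq_mul] using h
  have key : A'.adjugate.mulVec F' i - A.adjugate.mulVec F i =
      (∑ j, A'.adjugate i j * (F' j - F j - ∑ m, (y' m - y m) * A j m)) +
      (∑ j, (A'.adjugate i j - A.adjugate i j) * F j) +
      (∑ m, (∑ j, A'.adjugate i j * (A j m - A' j m)) * (y' m - y m)) +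
      (A.det * (y' i - y i) + (A'.det - A.det) * (y' i - y i)) := by
    have hdet' : A.det * (y' i - y i) + (A'.det - A.det) * (y' i - y i) =
        A'.det * (y' i - y i) := by ring
    rw [hdet']
    simp only [Matrix.mulVec, dotProduct]
    have e1 : ∑ m, (∑ j, A'.adjugate i j * (A j m - A' j m)) * (y' m - y m) =
        (∑ m, (∑ j, A'.adjugate i j * A j m) * (y' m - y m)) -
        (∑ m, (A'.det * (if i = m then 1 else 0)) * (y' m - y m)) := by
      rw [← Finset.sum_sub_distrib]
      refine Finset.sum_congr rfl fun m _ => ?_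
      rw [← hAA m, ← sub_mul, ← Finset.sum_sub_distrib]
      congr 1
      refine Finset.sum_congr rfl fun j _ => ?_
      ring
    rw [e1]
    have e2 : ∑ m, (A'.det * (if i = m then 1 else 0)) * (y' m - y m) =
        A'.det * (y' i - y i) := by
      rw [Finset.sum_congr rfl (fun m _ => by
        rw [mul_ite, mul_one, mul_zero, ite_mul, zero_mul] :
          ∀ m ∈ Finset.univ, (A'.det * (if i = m then 1 else 0)) * (y' m - y m) =
            if i = m then A'.det * (y' m - y m) else 0)]
      simp
    rw [e2]
    have e3 : ∑ m, (∑ j, A'.adjugate i j * A j m) * (y' m - y m) =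
        ∑ j, ∑ m, A'.adjugate i j * ((y' m - y m) * A j m) := by
      rw [Finset.sum_comm]
      refine Finset.sum_congr rfl fun j _ => ?_
      rw [Finset.sum_mul]
      refine Finset.sum_congr rfl fun m _ => by ring
    rw [e3]
    have e4 : ∑ j, A'.adjugate i j * (F' j - F j - ∑ m, (y' m - y m) * A j m) =
        (∑ j, A'.adjugate i j * F' j) - (∑ j, A'.adjugate i j * F j) -
        ∑ j, ∑ m, A'.adjugate i j * ((y' m - y m) * A j m) := by
      simp only [mul_sub, Finset.sum_sub_distrib, Finset.mul_sum]
    rw [e4]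
    have e5 : ∑ j, (A'.adjugate i j - A.adjugate i j) * F j =
        (∑ j, A'.adjugate i j * F j) - ∑ j, A.adjugate i j * F j := by
      simp only [sub_mul, Finset.sum_sub_distrib]
    rw [e5]
    ring
  rw [key]
  refine dvd_add (dvd_add (dvd_add ?_ ?_) ?_) ?_
  · exact Finset.dvd_sum fun j _ => (htaylor j).mul_left _
  · refine Finset.dvd_sum fun j _ => hpow.trans ?_
    rw [pow_two]
    exact mul_dvd_mul (hadj i j) (hFdvd j)
  · refine Finset.dvd_sum fun m _ => hpow.trans ?_
    rw [pow_two]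
    refine mul_dvd_mul (Finset.dvd_sum fun j _ => ?_) (he (Sum.inr m))
    exact (show q ^ (r - 1) ∣ A j m - A' j m by
      simpa [neg_sub] using (hAA' j m).neg_right).mul_left _
  · refine dvd_add ?_ (hpow.trans ?_)
    · have : q ^ r = q * q ^ (r - 1) := by
        rw [← pow_succ']
        congr 1
        omega
      rw [this]
      exact mul_dvd_mul hQd (he (Sum.inr i))
    · rw [pow_two]
      exact mul_dvd_mul hdet (he (Sum.inr i))

end
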